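/- arXiv:1303.5527 — 3 statements merged into one kernel-verified Lean document; each statement's English description precedes it below -/
import Mathlib

section
/- Let G be an r-regular simple graph on n vertices. Then, as an identity of polynomials in λ, (λ - n + 2 + 2r)·f(λ, G^c) = (-1)^n·(λ - 2n + 2 + 2r)·f(n - 2 - λ, G), where G^c is the complement of G. -/
open Classical

/-- The four symbols `0, 1, +, -` used in `xyz`-transformations. -/
inductive XYZ : Type
  | zero | one | plus | minus

namespace XYZ

/-- The relation on the vertices of a graph `H` given by a symbol:
`0` gives the empty graph, `1` the complete graph, `+` the graph itself,
`-` its complement. -/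
def rel {W : Type*} (H : SimpleGraph W) : XYZ → W → W → Prop
  | .zero => fun _ _ => False
  | .one  => fun u v => u ≠ v
  | .plus => fun u v => H.Adj u v
  | .minus => fun u v => u ≠ v ∧ ¬ H.Adj u v

/-- The incidence relation between a vertex and an edge given by a symbol `z`:
`+` means incident, `-` means non-incident, `0` never, `1` always. -/
def inc {W : Type*} (G : SimpleGraph W) : XYZ → W → G.edgeSet → Prop
  | .zero => fun _ _ => False
  | .one  => fun _ _ => True
  | .plus => fun v e => v ∈ (e : Sym2 W)
  | .minus => fun v e => v ∉ (e : Sym2 W)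

theorem rel_symm {W : Type*} (H : SimpleGraph W) (x : XYZ) {u v : W}
    (h : rel H x u v) : rel H x v u := by
  cases x with
  | zero => exact h.elim
  | one => exact (h : u ≠ v).symm
  | plus => exact H.adj_symm h
  | minus => exact ⟨(h.1).symm, fun h' => h.2 (H.adj_symm h')⟩

theorem rel_irrefl {W : Type*} (H : SimpleGraph W) (x : XYZ) {u : W}
    (h : rel H x u u) : False := by
  cases x with
  | zero => exact h
  | one => exact h rfl
  | plus => exact H.irrefl h
  | minus => exact h.1 rfl

end XYZ

/-- The `xyz`-transformation `G^{xyz}` of a graph `G`: its vertex set is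
`V(G) ⊕ E(G)`; two vertices of `G` are adjacent according to the symbol `x`
(applied to `G`), two edges according to the symbol `y` (applied to the line
graph of `G`), and a vertex and an edge according to the symbol `z`
(`+` = incidence graph `B(G)`, `-` = non-incidence graph `B^c(G)`,
`0` = no vertex-edge edges, `1` = all vertex-edge edges). -/
def xyzTransform {V : Type*} (G : SimpleGraph V) (x y z : XYZ) :
    SimpleGraph (V ⊕ G.edgeSet) where
  Adj a b :=
    match a, b with
    | Sum.inl u, Sum.inl v => XYZ.rel G x u v
    | Sum.inr e, Sum.inr f => XYZ.rel G.lineGraph y e f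
    | Sum.inl v, Sum.inr e => XYZ.inc G z v e
    | Sum.inr e, Sum.inl v => XYZ.inc G z v e
  symm := by
    constructor
    rintro (u | e) (v | f) h
    · exact XYZ.rel_symm G x h
    · exact h
    · exact h
    · exact XYZ.rel_symm G.lineGraph y h
  loopless := by
    constructor
    rintro (u | e) h
    · exact XYZ.rel_irrefl G x h
    · exact XYZ.rel_irrefl G.lineGraph y h

/-- The signless Laplacian matrix `Q(G) = D(G) + A(G)` of a graph. -/
noncomputable def signlessLaplacian {V : Type*} [Fintype V] (G : SimpleGraph V) :
    Matrix V V ℝ :=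
  Matrix.of fun u v =>
    (if u = v then (G.degree u : ℝ) else 0) + (if G.Adj u v then 1 else 0)

/-- The signless Laplacian characteristic polynomial
`f(λ, G) = det (λ I - Q(G))`, evaluated at a real number `λ`. -/
noncomputable def fQ {V : Type*} [Fintype V] (G : SimpleGraph V) (lam : ℝ) : ℝ :=
  Matrix.det (lam • (1 : Matrix V V ℝ) - signlessLaplacian G)


open Matrix in
lemma det_smul_one_add_smul_allOnes {V : Type*} [Fintype V] [DecidableEq V] (x c : ℝ)
    (hx : x ≠ 0) :
    (x • (1 : Matrix V V ℝ) + c • Matrix.of (fun _ _ => (1:ℝ))).det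
      = x ^ (Fintype.card V) * (1 + (Fintype.card V : ℝ) * (c * x⁻¹)) := by
  have key : x • (1 : Matrix V V ℝ) + c • Matrix.of (fun _ _ => (1:ℝ))
      = x • (1 + Matrix.replicateCol Unit (fun _ => c * x⁻¹) * Matrix.replicateRow Unit (fun _ => (1:ℝ))) := by
    ext i j
    simp only [Matrix.add_apply, Matrix.smul_apply, Matrix.of_apply, Matrix.mul_apply,
      Matrix.replicateCol_apply, Matrix.replicateRow_apply, smul_eq_mul, Finset.sum_const, Finset.card_univ,
      Fintype.card_unit, one_smul, mul_one]
    by_cases hij : i = j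
    · subst hij
      rw [Matrix.one_apply_eq]
      field_simp
    · field_simp
  rw [key, Matrix.det_smul, Matrix.det_one_add_replicateCol_mul_replicateRow]
  simp [dotProduct, mul_comm]

open Matrix in
lemma key_det {V : Type*} [Fintype V] [DecidableEq V] (M : Matrix V V ℝ) (s : ℝ)
    (h : M *ᵥ (fun _ => (1:ℝ)) = fun _ => s) :
    s * (M - Matrix.of (fun _ _ => (1:ℝ))).det
      = (s - (Fintype.card V : ℝ)) * M.det := by
  set J : Matrix V V ℝ := Matrix.of (fun _ _ => (1:ℝ)) with hJ
  set n : ℕ := Fintype.card V with hn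
  have hMJ : M * J = s • J := by
    ext i j
    have := congrFun h i
    simpa [Matrix.mul_apply, hJ, Matrix.mulVec, dotProduct] using this
  have hJJ : J * J = (n : ℝ) • J := by
    ext i j
    simp only [Matrix.mul_apply, hJ, Matrix.of_apply, mul_one, Finset.sum_const,
      Finset.card_univ, nsmul_eq_mul, Matrix.smul_apply, smul_eq_mul, ← hn]
  by_cases hs : s = 0
  · subst hs
    by_cases hcard : n = 0
    · simp [hcard]
    · have hx : (-(n : ℝ)) ≠ 0 := by
        simp only [ne_eq, neg_eq_zero, Nat.cast_eq_zero]; exact hcard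
      have h2 : (M - J) * ((-(n : ℝ)) • 1 + J) = (-(n : ℝ)) • M := by
        rw [Matrix.sub_mul, Matrix.mul_add, Matrix.mul_add, Matrix.mul_smul, Matrix.mul_smul,
          Matrix.mul_one, Matrix.mul_one, hMJ, hJJ, zero_smul, neg_smul, neg_smul]
        abel
      have e1 := congrArg Matrix.det h2
      rw [Matrix.det_mul, Matrix.det_smul] at e1
      have hdJ := det_smul_one_add_smul_allOnes (V := V) (-(n:ℝ)) 1 hx
      rw [one_smul] at hdJ
      have hnn : (1:ℝ) + (Fintype.card V : ℝ) * ((1:ℝ) * (-(n:ℝ))⁻¹) = 0 := by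
        rw [← hn]; field_simp; norm_num
      rw [hdJ, hnn, mul_zero, mul_zero, ← hn] at e1
      have hM0 : M.det = 0 := by
        rcases mul_eq_zero.mp e1.symm with h' | h'
        · exact absurd h' (pow_ne_zero _ hx)
        · exact h'
      simp [hM0]
  · have h1 : M * (s • 1 + (-1 : ℝ) • J) = s • (M - J) := by
      rw [Matrix.mul_add, Matrix.mul_smul, Matrix.mul_smul, Matrix.mul_one, hMJ, smul_sub,
        neg_one_smul]
      abel
    have e1 := congrArg Matrix.det h1
    rw [Matrix.det_mul, Matrix.det_smul, det_smul_one_add_smul_allOnes _ _ hs, ← hn] at e1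
    have h2 : (M - J).det = M.det * (1 + (n:ℝ) * ((-1:ℝ) * s⁻¹)) := by
      apply mul_left_cancel₀ (pow_ne_zero n hs)
      rw [← e1]; ring
    rw [h2]
    field_simp
    ring

open Matrix in
theorem signless_charpoly_complement {V : Type*} [Fintype V] (G : SimpleGraph V) (r n : ℕ)
    (hn : Fintype.card V = n) (hreg : G.IsRegularOfDegree r) :
    ∀ lam : ℝ,
      (lam - n + 2 + 2 * r) * fQ Gᶜ lam =
        (-1 : ℝ) ^ n * (lam - 2 * n + 2 + 2 * r) * fQ G ((n : ℝ) - 2 - lam) := by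
  subst hn
  intro lam
  set n : ℕ := Fintype.card V with hn
  set M : Matrix V V ℝ := (lam - n + 2 + r) • (1 : Matrix V V ℝ) + G.adjMatrix ℝ with hM
  have hrow : M *ᵥ (fun _ => (1:ℝ)) = fun _ => (lam - n + 2 + 2 * r) := by
    funext v
    rw [hM, Matrix.add_mulVec, Matrix.smul_mulVec, Matrix.one_mulVec]
    have : (G.adjMatrix ℝ *ᵥ fun _ => (1:ℝ)) v = (r : ℝ) * 1 :=
      SimpleGraph.adjMatrix_mulVec_const_apply_of_regular hreg
    simp only [Pi.add_apply, Pi.smul_apply, smul_eq_mul, this]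
    ring
  have hQc : lam • (1 : Matrix V V ℝ) - signlessLaplacian Gᶜ
      = M - Matrix.of (fun _ _ => (1:ℝ)) := by
    ext u v
    have hdeg : Gᶜ.degree u = Fintype.card V - 1 - G.degree u := SimpleGraph.degree_compl G u
    have hlt : G.degree u < Fintype.card V := G.degree_lt_card_verts u
    have hdegR : ∀ (i : Fintype ((Gᶜ : SimpleGraph V).neighborSet u)),
        ((@SimpleGraph.degree V Gᶜ u i : ℕ) : ℝ) = (n : ℝ) - 1 - (r : ℝ) := by
      intro i
      have hdeg2 : @SimpleGraph.degree V Gᶜ u i = Fintype.card V - 1 - G.degree u :=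
        @SimpleGraph.degree_compl V G u _ i _
      rw [hdeg2, hreg u]
      have h1 : r + 1 ≤ Fintype.card V := by rw [← hreg u]; omega
      push_cast [Nat.sub_sub, Nat.cast_sub (by omega : 1 + r ≤ Fintype.card V)]
      rw [← hn]
      ring
    by_cases huv : u = v
    · subst huv
      simp only [Matrix.sub_apply, Matrix.smul_apply, Matrix.one_apply_eq, smul_eq_mul,
        signlessLaplacian, Matrix.of_apply, SimpleGraph.irrefl, if_false,
        Matrix.add_apply, SimpleGraph.adjMatrix_apply, hM]
      rw [if_pos trivial, hdegR]
      ring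
    · have hcadj : Gᶜ.Adj u v ↔ ¬ G.Adj u v := by
        rw [SimpleGraph.compl_adj]
        exact ⟨fun h => h.2, fun h => ⟨huv, h⟩⟩
      simp only [Matrix.sub_apply, Matrix.smul_apply, Matrix.one_apply_ne huv, smul_eq_mul,
        mul_zero, signlessLaplacian, Matrix.of_apply, if_neg huv, Matrix.add_apply,
        SimpleGraph.adjMatrix_apply, hM]
      by_cases hadj : G.Adj u v
      · simp [hadj, hcadj.mpr, hcadj]
      · simp [hadj, hcadj]
  have hQ : ((n : ℝ) - 2 - lam) • (1 : Matrix V V ℝ) - signlessLaplacian G = -M := by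
    ext u v
    by_cases huv : u = v
    · subst huv
      simp only [Matrix.sub_apply, Matrix.smul_apply, Matrix.one_apply_eq, smul_eq_mul,
        signlessLaplacian, Matrix.of_apply, if_pos rfl, SimpleGraph.irrefl, if_false,
        Matrix.neg_apply, Matrix.add_apply, SimpleGraph.adjMatrix_apply, hM]
      rw [if_pos trivial, hreg u]
      ring
    · simp only [Matrix.sub_apply, Matrix.smul_apply, Matrix.one_apply_ne huv, smul_eq_mul,
        mul_zero, signlessLaplacian, Matrix.of_apply, if_neg huv, Matrix.neg_apply,
        Matrix.add_apply, SimpleGraph.adjMatrix_apply, hM]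
      by_cases hadj : G.Adj u v <;> simp [hadj]
  have hkey := key_det M (lam - n + 2 + 2 * r) hrow
  have hL : fQ Gᶜ lam = (M - Matrix.of (fun _ _ => (1:ℝ))).det := by
    rw [fQ, hQc]
  have hR : fQ G ((n : ℝ) - 2 - lam) = (-1 : ℝ) ^ n * M.det := by
    rw [fQ, hQ, Matrix.det_neg, ← hn]
  rw [hL, hR, hkey, ← hn]
  have hpow : ((-1 : ℝ) ^ n) * ((-1 : ℝ) ^ n) = 1 := by
    rw [← pow_add, Even.neg_one_pow ⟨n, by ring⟩]
  linear_combination (-(lam - 2 * (n:ℝ) + 2 + 2 * r)) * M.det * hpow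
end

section
/- Let G be an r-regular simple graph with n vertices and m ≥ 1 edges, and let q_1 ≤ q_2 ≤ … ≤ q_n = 2r be the eigenvalues of Q(G) listed with multiplicity. Then f(λ, G^{+01}) = [(λ-n)(λ-2r-m) - mn]·(λ-n)^{m-1}·∏_{i=1}^{n-1}(λ - m - q_i). -/
open Classical

section AuxLemmas

/-- Evaluating the characteristic polynomial of a matrix. -/
lemma eval_charpoly_aux {ι : Type*} [Fintype ι] [DecidableEq ι] (M : Matrix ι ι ℝ) (x : ℝ) :
    (M.charpoly).eval x = (x • (1 : Matrix ι ι ℝ) - M).det := by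
  have h : (M.charpoly).eval x = ((Matrix.charmatrix M).map (Polynomial.evalRingHom x)).det :=
    RingHom.map_det (Polynomial.evalRingHom x) (Matrix.charmatrix M)
  rw [h]
  congr 1
  ext i j
  by_cases hij : i = j
  · subst hij
    simp [Matrix.charmatrix_apply, Matrix.one_apply]
  · simp [Matrix.charmatrix_apply, Matrix.one_apply, hij, Matrix.diagonal_apply_ne _ hij]

end AuxLemmas

open scoped Matrix

theorem signless_charpoly_xyz_p01 {V : Type*} [Fintype V] (G : SimpleGraph V) (r n m : ℕ)
    (hn : Fintype.card V = n) (hm : Fintype.card G.edgeSet = m)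
    (hreg : G.IsRegularOfDegree r) (hm1 : 1 ≤ m) (hn0 : 0 < n)
    (q : Fin n → ℝ) (hmono : Monotone q)
    (hlast : q ⟨n - 1, by omega⟩ = 2 * r)
    (hq : ∀ x : ℝ, fQ G x = ∏ i : Fin n, (x - q i)) :
    ∀ lam : ℝ,
      fQ (xyzTransform G XYZ.plus XYZ.zero XYZ.one) lam =
        ((lam - n) * (lam - 2 * r - m) - m * n) * (lam - n) ^ (m - 1) *
          ∏ i : Fin (n - 1), (lam - m - (q (Fin.castLE (Nat.sub_le n 1) i))) := by
  obtain ⟨k, rfl⟩ : ∃ k, n = k + 1 := ⟨n - 1, by omega⟩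
  set H := xyzTransform G XYZ.plus XYZ.zero XYZ.one with hH
  -- adjacency facts
  have hA11 : ∀ u w : V, H.Adj (Sum.inl u) (Sum.inl w) ↔ G.Adj u w := fun _ _ => Iff.rfl
  have hA12 : ∀ (u : V) (f : G.edgeSet), H.Adj (Sum.inl u) (Sum.inr f) := fun _ _ => trivial
  have hA21 : ∀ (e : G.edgeSet) (w : V), H.Adj (Sum.inr e) (Sum.inl w) := fun _ _ => trivial
  have hA22 : ∀ e f : G.edgeSet, ¬ H.Adj (Sum.inr e) (Sum.inr f) := fun _ _ h => h
  -- degrees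
  have hdegH1 : ∀ v : V, H.degree (Sum.inl v) = r + m := by
    intro v
    rw [← SimpleGraph.card_neighborSet_eq_degree]
    have e : ↥(H.neighborSet (Sum.inl v)) ≃ ↥(G.neighborSet v) ⊕ ↥G.edgeSet :=
      { toFun := fun x => match x with
          | ⟨Sum.inl u, h⟩ => Sum.inl ⟨u, h⟩
          | ⟨Sum.inr e, _⟩ => Sum.inr e
        invFun := Sum.elim (fun u => ⟨Sum.inl u.1, u.2⟩) (fun e => ⟨Sum.inr e, trivial⟩)
        left_inv := by rintro ⟨(u | e), h⟩ <;> rfl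
        right_inv := by rintro (⟨u, h⟩ | e) <;> rfl }
    rw [Fintype.card_congr e, Fintype.card_sum, SimpleGraph.card_neighborSet_eq_degree,
      hreg v, hm]
  have hdegH2 : ∀ e : G.edgeSet, H.degree (Sum.inr e) = k + 1 := by
    intro e
    rw [← SimpleGraph.card_neighborSet_eq_degree]
    have e' : ↥(H.neighborSet (Sum.inr e)) ≃ V :=
      { toFun := fun x => match x with
          | ⟨Sum.inl u, _⟩ => u
          | ⟨Sum.inr f, h⟩ => ((hA22 e f h).elim)
        invFun := fun u => ⟨Sum.inl u, trivial⟩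
        left_inv := by
          rintro ⟨(u | f), h⟩
          · rfl
          · exact ((hA22 e f h).elim)
        right_inv := fun u => rfl }
    rw [Fintype.card_congr e', hn]
  -- block decomposition
  have hblock : ∀ x : ℝ,
      fQ H x =
        (Matrix.fromBlocks ((x - m) • (1 : Matrix V V ℝ) - signlessLaplacian G)
          (Matrix.of fun (_ : V) (_ : G.edgeSet) => (-1 : ℝ))
          (Matrix.of fun (_ : G.edgeSet) (_ : V) => (-1 : ℝ))
          ((x - (k + 1 : ℕ)) • (1 : Matrix G.edgeSet G.edgeSet ℝ))).det := by
    intro x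
    unfold fQ
    congr 1
    ext i j
    rcases i with u | e <;> rcases j with w | f
    · simp only [Matrix.sub_apply, Matrix.smul_apply, Matrix.one_apply, signlessLaplacian,
        Matrix.of_apply, Matrix.fromBlocks_apply₁₁, Sum.inl.injEq, hA11, hdegH1,
        hreg.degree_eq, smul_eq_mul]
      split_ifs <;> push_cast <;> ring
    · simp only [Matrix.sub_apply, Matrix.smul_apply, Matrix.one_apply, signlessLaplacian,
        Matrix.of_apply, Matrix.fromBlocks_apply₁₂, smul_eq_mul, reduceCtorEq, if_false,
        if_pos (hA12 u f)]
      ring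
    · simp only [Matrix.sub_apply, Matrix.smul_apply, Matrix.one_apply, signlessLaplacian,
        Matrix.of_apply, Matrix.fromBlocks_apply₂₁, smul_eq_mul, reduceCtorEq, if_false,
        if_pos (hA21 e w)]
      ring
    · simp only [Matrix.sub_apply, Matrix.smul_apply, Matrix.one_apply, signlessLaplacian,
        Matrix.of_apply, Matrix.fromBlocks_apply₂₂, Sum.inr.injEq, hdegH2, smul_eq_mul,
        if_neg (hA22 e f)]
      split_ifs <;> push_cast <;> ring
  -- row sums of the signless Laplacian of G
  have hadj_sum : ∀ v : V, ∑ w, (if G.Adj v w then (1 : ℝ) else 0) = r := by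
    intro v
    rw [Finset.sum_boole]
    have h : (Finset.univ.filter fun w => G.Adj v w) = G.neighborFinset v := by
      ext w; simp [SimpleGraph.mem_neighborFinset]
    rw [h]
    have h2 := hreg v
    rw [SimpleGraph.degree] at h2
    rw [h2]
  have hQg1 : ∀ v : V, ∑ w, signlessLaplacian G v w = 2 * r := by
    intro v
    simp only [signlessLaplacian, Matrix.of_apply]
    rw [Finset.sum_add_distrib, hadj_sum v, Finset.sum_ite_eq Finset.univ v
      (fun _ => ((G.degree v : ℝ)))]
    simp [hreg.degree_eq]
    ring
  -- main pointwise identity away from the bad set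
  have key : ∀ x : ℝ, x ≠ ((k + 1 : ℕ) : ℝ) → (∀ i : Fin (k + 1), x ≠ (m : ℝ) + q i) →
      fQ H x = ((x - (k + 1 : ℕ)) * (x - 2 * r - m) - m * (k + 1 : ℕ)) *
        (x - (k + 1 : ℕ)) ^ (m - 1) * ∏ i : Fin k, (x - m - q i.castSucc) := by
    intro x hx hxi
    have h2r : x ≠ (m : ℝ) + 2 * r := by
      have h := hxi ⟨k + 1 - 1, by omega⟩
      rwa [show q ⟨k + 1 - 1, by omega⟩ = 2 * (r : ℝ) from hlast] at h
    have hκ0 : x - ((k + 1 : ℕ) : ℝ) ≠ 0 := sub_ne_zero.mpr hx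
    have ht0 : x - (m : ℝ) - 2 * r ≠ 0 := by
      intro h0; exact h2r (by linarith)
    set X : Matrix V V ℝ := (x - m) • (1 : Matrix V V ℝ) - signlessLaplacian G with hX
    have hdetX : X.det = ∏ i : Fin (k + 1), (x - m - q i) := by
      have h := hq (x - m)
      rw [fQ] at h
      rw [hX]
      exact h
    have hX0 : X.det ≠ 0 := by
      rw [hdetX]
      refine Finset.prod_ne_zero_iff.mpr fun i _ => ?_
      intro h0
      exact hxi i (by linarith)
    have hXunit : IsUnit X.det := isUnit_iff_ne_zero.mpr hX0
    have hXmul : X *ᵥ (fun _ => (1 : ℝ)) = (x - (m : ℝ) - 2 * r) • (fun _ => (1 : ℝ)) := by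
      funext v
      simp only [Matrix.mulVec, dotProduct, hX, Matrix.sub_apply, Matrix.smul_apply,
        Matrix.one_apply, smul_eq_mul, mul_one, Pi.smul_apply, mul_ite, mul_zero]
      rw [Finset.sum_sub_distrib, hQg1 v, Finset.sum_ite_eq Finset.univ v
        (fun _ => x - (m : ℝ))]
      simp
    have hXinv1 : X⁻¹ *ᵥ (fun _ => (1 : ℝ)) =
        (x - (m : ℝ) - 2 * r)⁻¹ • (fun _ => (1 : ℝ)) := by
      have h1 : X⁻¹ *ᵥ (X *ᵥ (fun _ => (1 : ℝ))) = fun _ => (1 : ℝ) := by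
        rw [Matrix.mulVec_mulVec, Matrix.nonsing_inv_mul X hXunit, Matrix.one_mulVec]
      rw [hXmul, Matrix.mulVec_smul] at h1
      calc X⁻¹ *ᵥ (fun _ => (1 : ℝ))
          = (x - (m : ℝ) - 2 * r)⁻¹ • ((x - (m : ℝ) - 2 * r) •
              (X⁻¹ *ᵥ (fun _ => (1 : ℝ)))) := by
            rw [smul_smul, inv_mul_cancel₀ ht0, one_smul]
        _ = (x - (m : ℝ) - 2 * r)⁻¹ • (fun _ => (1 : ℝ)) := by rw [h1]
    -- determinant computation
    letI hDinv : Invertible ((x - ((k + 1 : ℕ) : ℝ)) • (1 : Matrix G.edgeSet G.edgeSet ℝ)) :=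
      ⟨(x - ((k + 1 : ℕ) : ℝ))⁻¹ • (1 : Matrix G.edgeSet G.edgeSet ℝ),
        by rw [Matrix.smul_mul, Matrix.one_mul, smul_smul, inv_mul_cancel₀ hκ0, one_smul],
        by rw [Matrix.smul_mul, Matrix.one_mul, smul_smul, mul_inv_cancel₀ hκ0, one_smul]⟩
    rw [hblock x, Matrix.det_fromBlocks₂₂, ← hX]
    have hdetD : ((x - ((k + 1 : ℕ) : ℝ)) • (1 : Matrix G.edgeSet G.edgeSet ℝ)).det =
        (x - ((k + 1 : ℕ) : ℝ)) ^ m := by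
      rw [Matrix.det_smul, Matrix.det_one, mul_one, hm]
    have hinvD : ⅟((x - ((k + 1 : ℕ) : ℝ)) • (1 : Matrix G.edgeSet G.edgeSet ℝ)) =
        (x - ((k + 1 : ℕ) : ℝ))⁻¹ • (1 : Matrix G.edgeSet G.edgeSet ℝ) := rfl
    have hBDC : (Matrix.of fun (_ : V) (_ : G.edgeSet) => (-1 : ℝ)) *
        ⅟((x - ((k + 1 : ℕ) : ℝ)) • (1 : Matrix G.edgeSet G.edgeSet ℝ)) *
        (Matrix.of fun (_ : G.edgeSet) (_ : V) => (-1 : ℝ)) =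
        Matrix.of fun (_ : V) (_ : V) => (x - ((k + 1 : ℕ) : ℝ))⁻¹ * m := by
      rw [hinvD, Matrix.mul_smul, Matrix.mul_one, Matrix.smul_mul]
      ext i j
      simp only [Matrix.smul_apply, Matrix.mul_apply, Matrix.of_apply, smul_eq_mul,
        neg_mul_neg, mul_one]
      rw [Finset.sum_const, Finset.card_univ, hm]
      simp [nsmul_eq_mul]
    rw [hBDC]
    have hrank1 : X - Matrix.of (fun (_ : V) (_ : V) => (x - ((k + 1 : ℕ) : ℝ))⁻¹ * (m : ℝ)) =
        X + Matrix.replicateCol Unit (fun _ => -((x - ((k + 1 : ℕ) : ℝ))⁻¹ * (m : ℝ))) *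
          Matrix.replicateRow Unit (fun _ => (1 : ℝ)) := by
      ext i j
      simp only [Matrix.sub_apply, Matrix.add_apply, Matrix.of_apply, Matrix.mul_apply,
        Matrix.replicateCol_apply, Matrix.replicateRow_apply, Finset.univ_unique, Finset.sum_singleton, mul_one]
      ring
    rw [hrank1, Matrix.det_add_replicateCol_mul_replicateRow hXunit]
    have hmidvec : X⁻¹ *ᵥ (fun _ : V => -((x - ((k + 1 : ℕ) : ℝ))⁻¹ * (m : ℝ))) =
        fun _ : V => -((x - ((k + 1 : ℕ) : ℝ))⁻¹ * (m : ℝ)) * (x - (m : ℝ) - 2 * r)⁻¹ := by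
      have h : (fun _ : V => -((x - ((k + 1 : ℕ) : ℝ))⁻¹ * (m : ℝ))) =
          (-((x - ((k + 1 : ℕ) : ℝ))⁻¹ * (m : ℝ))) • (fun _ : V => (1 : ℝ)) := by
        funext v; simp
      rw [h, Matrix.mulVec_smul, hXinv1]
      funext v
      simp only [Pi.smul_apply, smul_eq_mul, mul_one]
    have hmid : (Matrix.replicateRow Unit (fun _ : V => (1 : ℝ)) : Matrix Unit V ℝ) * X⁻¹ *
        (Matrix.replicateCol Unit (fun _ => -((x - ((k + 1 : ℕ) : ℝ))⁻¹ * (m : ℝ))) :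
          Matrix V Unit ℝ) =
        Matrix.of fun (_ : Unit) (_ : Unit) =>
          -((x - ((k + 1 : ℕ) : ℝ))⁻¹ * (m : ℝ)) * (x - (m : ℝ) - 2 * r)⁻¹ * (k + 1 : ℕ) := by
      rw [Matrix.mul_assoc, ← Matrix.replicateCol_mulVec, hmidvec]
      ext i j
      rw [Matrix.replicateRow_mul_replicateCol_apply]
      simp only [dotProduct, one_mul, Matrix.of_apply]
      rw [Finset.sum_const, Finset.card_univ, hn, nsmul_eq_mul]
      push_cast
      ring
    rw [hmid]
    have hdet1 : ((1 : Matrix Unit Unit ℝ) + Matrix.of fun (_ : Unit) (_ : Unit) =>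
        -((x - ((k + 1 : ℕ) : ℝ))⁻¹ * (m : ℝ)) * (x - (m : ℝ) - 2 * r)⁻¹ * (k + 1 : ℕ)).det =
        1 - (x - ((k + 1 : ℕ) : ℝ))⁻¹ * m * (x - (m : ℝ) - 2 * r)⁻¹ * (k + 1 : ℕ) := by
      rw [Matrix.det_unique]
      simp only [Matrix.add_apply, Matrix.one_apply_eq, Matrix.of_apply]
      ring
    rw [hdet1, hdetD, hdetX]
    -- split off the last eigenvalue
    have hsplit : ∏ i : Fin (k + 1), (x - m - q i) =
        (∏ i : Fin k, (x - m - q i.castSucc)) * (x - (m : ℝ) - 2 * r) := by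
      rw [Fin.prod_univ_castSucc]
      congr 1
      rw [show q (Fin.last k) = 2 * (r : ℝ) from hlast]
    rw [hsplit]
    have hmpow : (x - ((k + 1 : ℕ) : ℝ)) ^ m = (x - ((k + 1 : ℕ) : ℝ)) ^ (m - 1) *
        (x - ((k + 1 : ℕ) : ℝ)) := by
      conv_lhs => rw [show m = m - 1 + 1 by omega]
      rw [pow_succ]
    rw [hmpow]
    have htx : x - 2 * (r : ℝ) - m = x - (m : ℝ) - 2 * r := by ring
    rw [htx]
    have h1 : (x - ((k + 1 : ℕ) : ℝ)) * (x - ((k + 1 : ℕ) : ℝ))⁻¹ = 1 := mul_inv_cancel₀ hκ0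
    have h2 : (x - (m : ℝ) - 2 * r) * (x - (m : ℝ) - 2 * r)⁻¹ = 1 := mul_inv_cancel₀ ht0
    have hcancel : (x - ((k + 1 : ℕ) : ℝ)) * (x - (m : ℝ) - 2 * r) *
        (1 - (x - ((k + 1 : ℕ) : ℝ))⁻¹ * (m : ℝ) * (x - (m : ℝ) - 2 * r)⁻¹ * ((k + 1 : ℕ) : ℝ)) =
        (x - ((k + 1 : ℕ) : ℝ)) * (x - (m : ℝ) - 2 * r) - (m : ℝ) * ((k + 1 : ℕ) : ℝ) := by
      rw [mul_sub, mul_one]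
      congr 1
      calc (x - ((k + 1 : ℕ) : ℝ)) * (x - (m : ℝ) - 2 * r) *
          ((x - ((k + 1 : ℕ) : ℝ))⁻¹ * (m : ℝ) * (x - (m : ℝ) - 2 * r)⁻¹ * ((k + 1 : ℕ) : ℝ)) =
          ((x - ((k + 1 : ℕ) : ℝ)) * (x - ((k + 1 : ℕ) : ℝ))⁻¹) *
            ((x - (m : ℝ) - 2 * r) * (x - (m : ℝ) - 2 * r)⁻¹) *
            ((m : ℝ) * ((k + 1 : ℕ) : ℝ)) := by ring
        _ = (m : ℝ) * ((k + 1 : ℕ) : ℝ) := by rw [h1, h2]; ring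
    rw [← hcancel]
    ring
  -- polynomial argument
  have hfq_eval : ∀ x : ℝ, fQ H x = ((signlessLaplacian H).charpoly).eval x := by
    intro x
    rw [eval_charpoly_aux]
    unfold fQ
    congr 1
    ext i j
    simp only [Matrix.sub_apply, Matrix.smul_apply, Matrix.one_apply, smul_eq_mul]
    split_ifs <;> rfl
  set P : Polynomial ℝ :=
    ((Polynomial.X - Polynomial.C ((k + 1 : ℕ) : ℝ)) *
        (Polynomial.X - Polynomial.C (2 * (r : ℝ) + m)) -
      Polynomial.C ((m : ℝ) * ((k + 1 : ℕ) : ℝ))) *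
      (Polynomial.X - Polynomial.C ((k + 1 : ℕ) : ℝ)) ^ (m - 1) *
      ∏ i : Fin k, (Polynomial.X - Polynomial.C ((m : ℝ) + q i.castSucc)) with hP
  have hPeval : ∀ x : ℝ, P.eval x =
      ((x - (k + 1 : ℕ)) * (x - 2 * r - m) - m * (k + 1 : ℕ)) * (x - (k + 1 : ℕ)) ^ (m - 1) *
        ∏ i : Fin k, (x - m - q i.castSucc) := by
    intro x
    simp only [hP, Polynomial.eval_mul, Polynomial.eval_sub, Polynomial.eval_pow,
      Polynomial.eval_prod, Polynomial.eval_X, Polynomial.eval_C]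
    rw [show x - (2 * (r : ℝ) + m) = x - 2 * r - m by ring]
    congr 1
    exact Finset.prod_congr rfl fun i _ => by ring
  have hSfin : (insert ((k + 1 : ℕ) : ℝ)
      (Set.range fun i : Fin (k + 1) => (m : ℝ) + q i)).Finite :=
    (Set.finite_range _).insert _
  have hchar : (signlessLaplacian H).charpoly = P := by
    apply Polynomial.eq_of_infinite_eval_eq
    apply Set.Infinite.mono ?_ (hSfin.infinite_compl)
    intro x hx
    simp only [Set.mem_compl_iff, Set.mem_insert_iff, Set.mem_range, not_or, not_exists] at hx
    obtain ⟨hx1, hx2⟩ := hx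
    simp only [Set.mem_setOf_eq]
    rw [← hfq_eval x, hPeval x]
    exact key x hx1 fun i h => hx2 i h.symm
  intro lam
  rw [hfq_eval lam, hchar, hPeval lam]
  rfl
end

section
/- Let G be an r-regular simple graph with n vertices and m edges, where r ≥ 2 (so that m ≥ n), and let q_1 ≤ q_2 ≤ … ≤ q_n = 2r be the eigenvalues of Q(G) listed with multiplicity. Then f(λ, G^{++1}) = [(λ-2r-m)(λ-n-4r+4) - mn]·(λ-n-2r+4)^{m-n}·∏_{i=1}^{n-1}(λ - n - 2r + 4 - q_i)(λ - m - q_i). -/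
open Classical

namespace XYZAux

open Matrix Finset

variable {V : Type*} [Fintype V] (G : SimpleGraph V)

/-- The (vertex × edge) incidence matrix of a graph. -/
noncomputable def incMat : Matrix V G.edgeSet ℝ :=
  Matrix.of fun v e => if v ∈ (e : Sym2 V) then 1 else 0

lemma degree_cast {W : Type*} [Fintype W] (H : SimpleGraph W) (w : W) :
    ((H.degree w : ℝ)) = ∑ u, if H.Adj w u then (1:ℝ) else 0 := by
  classical
  rw [Finset.sum_boole, SimpleGraph.degree, SimpleGraph.neighborFinset_eq_filter]

lemma sum_mem_edge (v : V) :
    ∑ e : G.edgeSet, (if v ∈ (e : Sym2 V) then (1:ℝ) else 0) = G.degree v := by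
  classical
  rw [Finset.sum_boole]
  norm_num
  rw [← Fintype.card_subtype]
  rw [← SimpleGraph.card_incidenceSet_eq_degree (G := G) (v := v)]
  apply Fintype.card_congr
  exact {
    toFun := fun x => ⟨x.1.1, x.1.2, x.2⟩
    invFun := fun y => ⟨⟨y.1, y.2.1⟩, y.2.2⟩
    left_inv := fun x => rfl
    right_inv := fun y => rfl }

lemma sum_mem_vertex (e : G.edgeSet) :
    ∑ v : V, (if v ∈ (e : Sym2 V) then (1:ℝ) else 0) = 2 := by
  classical
  obtain ⟨e, he⟩ := e
  induction e with
  | _ a b =>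
    have hab : a ≠ b := G.ne_of_adj (G.mem_edgeSet.mp he)
    simp only [Sym2.mem_iff]
    rw [Finset.sum_boole]
    have h2 : (Finset.univ.filter fun v => v = a ∨ v = b) = {a, b} := by
      ext w; simp
    rw [h2, Finset.card_pair hab]
    norm_num

lemma incMat_mul_transpose : incMat G * (incMat G)ᵀ = signlessLaplacian G := by
  classical
  ext u v
  rw [Matrix.mul_apply]
  simp only [incMat, Matrix.transpose_apply, Matrix.of_apply, signlessLaplacian]
  by_cases huv : u = v
  · subst huv
    simp only [if_pos rfl, if_neg (G.irrefl (v := u)), add_zero]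
    rw [← sum_mem_edge G u]
    refine Finset.sum_congr rfl fun e _ => ?_
    by_cases h : u ∈ (e : Sym2 V) <;> simp [h]
  · rw [if_neg huv, zero_add]
    have key : ∀ e : G.edgeSet, ((u ∈ (e:Sym2 V) ∧ v ∈ (e:Sym2 V)) ↔ (e : Sym2 V) = s(u,v)) :=
      fun e => Sym2.mem_and_mem_iff huv
    by_cases hadj : G.Adj u v
    · rw [if_pos hadj]
      rw [Finset.sum_eq_single (⟨s(u,v), G.mem_edgeSet.mpr hadj⟩ : G.edgeSet)]
      · simp
      · intro e _ hne
        have hcon : ¬ (u ∈ (e:Sym2 V) ∧ v ∈ (e:Sym2 V)) := by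
          rw [key e]
          exact fun h => hne (Subtype.ext h)
        rcases not_and_or.mp hcon with h | h
        · simp [h]
        · simp [h]
      · intro h; exact absurd (Finset.mem_univ _) h
    · rw [if_neg hadj]
      refine Finset.sum_eq_zero fun e _ => ?_
      have hcon : ¬ (u ∈ (e:Sym2 V) ∧ v ∈ (e:Sym2 V)) := by
        rw [key e]
        intro h
        exact hadj (G.mem_edgeSet.mp (h ▸ e.2))
      rcases not_and_or.mp hcon with h | h
      · simp [h]
      · simp [h]

/-- The Gram matrix of the incidence matrix on the edge side. -/
noncomputable def NMat : Matrix G.edgeSet G.edgeSet ℝ := (incMat G)ᵀ * incMat G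

lemma NMat_diag (e : G.edgeSet) : NMat G e e = 2 := by
  classical
  rw [NMat, Matrix.mul_apply]
  rw [← sum_mem_vertex G e]
  refine Finset.sum_congr rfl fun v _ => ?_
  simp only [incMat, Matrix.transpose_apply, Matrix.of_apply]
  by_cases h : v ∈ (e : Sym2 V) <;> simp [h]

lemma NMat_ne {e f : G.edgeSet} (hef : e ≠ f) :
    NMat G e f = if G.lineGraph.Adj e f then 1 else 0 := by
  classical
  rw [NMat, Matrix.mul_apply]
  simp only [incMat, Matrix.transpose_apply, Matrix.of_apply]
  by_cases hadj : G.lineGraph.Adj e f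
  · obtain ⟨-, w, hw1, hw2⟩ := SimpleGraph.lineGraph_adj_iff_exists.mp hadj
    rw [if_pos hadj]
    rw [Finset.sum_eq_single w]
    · simp [hw1, hw2]
    · intro v _ hvw
      by_cases hv1 : v ∈ (e : Sym2 V)
      · by_cases hv2 : v ∈ (f : Sym2 V)
        · exact absurd (Subtype.ext (Sym2.eq_of_ne_mem hvw hv1 hw1 hv2 hw2)) hef
        · simp [hv2]
      · simp [hv1]
    · intro h; exact absurd (Finset.mem_univ _) h
  · rw [if_neg hadj]
    refine Finset.sum_eq_zero fun v _ => ?_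
    have hcon : ¬ (v ∈ (e : Sym2 V) ∧ v ∈ (f : Sym2 V)) := by
      intro h
      exact hadj (SimpleGraph.lineGraph_adj_iff_exists.mpr ⟨hef, v, h.1, h.2⟩)
    rcases not_and_or.mp hcon with h | h
    · simp [h]
    · simp [h]

end XYZAux

namespace XYZAux

open Matrix Finset

variable {V : Type*} [Fintype V] (G : SimpleGraph V)

lemma degT_inl (v : V) :
    ((xyzTransform G XYZ.plus XYZ.plus XYZ.one).degree (Sum.inl v) : ℝ)
      = G.degree v + Fintype.card G.edgeSet := by
  classical
  rw [degree_cast, Fintype.sum_sum_type]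
  have h1 : ∀ u : V,
      (if (xyzTransform G XYZ.plus XYZ.plus XYZ.one).Adj (Sum.inl v) (Sum.inl u) then (1:ℝ) else 0)
        = (if G.Adj v u then 1 else 0) := fun u => if_congr Iff.rfl rfl rfl
  have h2 : ∀ e : G.edgeSet,
      (if (xyzTransform G XYZ.plus XYZ.plus XYZ.one).Adj (Sum.inl v) (Sum.inr e) then (1:ℝ) else 0)
        = 1 := fun e => if_pos True.intro
  rw [Finset.sum_congr rfl (fun u _ => h1 u), Finset.sum_congr rfl (fun e _ => h2 e)]
  rw [← degree_cast, Finset.sum_const, Finset.card_univ]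
  simp

lemma sum_lineAdj {r : ℕ} (hreg : G.IsRegularOfDegree r) (e : G.edgeSet) :
    ∑ f : G.edgeSet, (if G.lineGraph.Adj e f then (1:ℝ) else 0) = 2*r - 2 := by
  classical
  obtain ⟨e, he⟩ := e
  induction e with
  | _ a b =>
    have hadj : G.Adj a b := G.mem_edgeSet.mp he
    have hab : a ≠ b := G.ne_of_adj hadj
    set e₀ : G.edgeSet := ⟨s(a,b), he⟩ with he₀
    have key : ∀ f : G.edgeSet,
        (if G.lineGraph.Adj e₀ f then (1:ℝ) else 0)
          = (if a ∈ (f : Sym2 V) then (1:ℝ) else 0) + (if b ∈ (f : Sym2 V) then (1:ℝ) else 0)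
            - 2 * (if f = e₀ then (1:ℝ) else 0) := by
      intro f
      by_cases hf : f = e₀
      · subst hf
        rw [if_neg G.lineGraph.irrefl, if_pos rfl,
          if_pos (Sym2.mem_mk_left a b : a ∈ (e₀ : Sym2 V)),
          if_pos (Sym2.mem_mk_right a b : b ∈ (e₀ : Sym2 V))]
        ring
      · rw [if_neg hf]
        by_cases ha : a ∈ (f : Sym2 V)
        · by_cases hb : b ∈ (f : Sym2 V)
          · exact absurd (Subtype.ext ((Sym2.mem_and_mem_iff hab).mp ⟨ha, hb⟩)) hf
          · rw [if_pos ha, if_neg hb]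
            rw [if_pos (SimpleGraph.lineGraph_adj_iff_exists.mpr
              ⟨fun h => hf h.symm, a, Sym2.mem_mk_left a b, ha⟩)]
            ring
        · by_cases hb : b ∈ (f : Sym2 V)
          · rw [if_neg ha, if_pos hb]
            rw [if_pos (SimpleGraph.lineGraph_adj_iff_exists.mpr
              ⟨fun h => hf h.symm, b, Sym2.mem_mk_right a b, hb⟩)]
            ring
          · rw [if_neg ha, if_neg hb]
            have : ¬ G.lineGraph.Adj e₀ f := by
              intro h
              obtain ⟨-, w, hw1, hw2⟩ := SimpleGraph.lineGraph_adj_iff_exists.mp h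
              rw [he₀] at hw1
              rcases Sym2.mem_iff.mp hw1 with rfl | rfl
              · exact ha hw2
              · exact hb hw2
            rw [if_neg this]; ring
    rw [Finset.sum_congr rfl (fun f _ => key f)]
    rw [Finset.sum_sub_distrib, Finset.sum_add_distrib, ← Finset.mul_sum]
    rw [sum_mem_edge G a, sum_mem_edge G b, hreg a, hreg b]
    have : (∑ f : G.edgeSet, if f = e₀ then (1:ℝ) else 0) = 1 := by
      simp
    rw [this]; ring

lemma degT_inr {r : ℕ} (hreg : G.IsRegularOfDegree r) (e : G.edgeSet) :
    ((xyzTransform G XYZ.plus XYZ.plus XYZ.one).degree (Sum.inr e) : ℝ)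
      = Fintype.card V + 2*r - 2 := by
  classical
  rw [degree_cast, Fintype.sum_sum_type]
  have h1 : ∀ v : V,
      (if (xyzTransform G XYZ.plus XYZ.plus XYZ.one).Adj (Sum.inr e) (Sum.inl v) then (1:ℝ) else 0)
        = 1 := fun v => if_pos True.intro
  have h2 : ∀ f : G.edgeSet,
      (if (xyzTransform G XYZ.plus XYZ.plus XYZ.one).Adj (Sum.inr e) (Sum.inr f) then (1:ℝ) else 0)
        = (if G.lineGraph.Adj e f then 1 else 0) := fun f => if_congr Iff.rfl rfl rfl
  rw [Finset.sum_congr rfl (fun v _ => h1 v), Finset.sum_congr rfl (fun f _ => h2 f)]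
  rw [sum_lineAdj G hreg e, Finset.sum_const, Finset.card_univ]
  simp [add_sub_assoc]

lemma fQ_eq_det {W : Type*} [Fintype W] [d : DecidableEq W] (H : SimpleGraph W) (t : ℝ) :
    fQ H t = (t • (1 : Matrix W W ℝ) - signlessLaplacian H).det := by
  have hd : (fun a b => propDecidable (a = b) : DecidableEq W) = d := by
    funext a b; exact Subsingleton.elim _ _
  unfold fQ
  cases hd
  rfl

lemma block_eq {r : ℕ} (hreg : G.IsRegularOfDegree r) (lam : ℝ) :
    lam • (1 : Matrix (V ⊕ G.edgeSet) (V ⊕ G.edgeSet) ℝ)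
        - signlessLaplacian (xyzTransform G XYZ.plus XYZ.plus XYZ.one)
      = Matrix.fromBlocks
          ((lam - Fintype.card G.edgeSet) • 1 - signlessLaplacian G)
          (-(Matrix.of fun _ _ => 1))
          (-(Matrix.of fun _ _ => 1))
          ((lam - Fintype.card V - 2*r + 4) • 1 - NMat G) := by
  classical
  ext i j
  rcases i with u | e <;> rcases j with v | f
  · simp only [Matrix.sub_apply, Matrix.smul_apply, Matrix.one_apply, smul_eq_mul,
      Matrix.fromBlocks_apply₁₁, signlessLaplacian, Matrix.of_apply, Sum.inl.injEq]
    have hA : (if (xyzTransform G XYZ.plus XYZ.plus XYZ.one).Adj (Sum.inl u) (Sum.inl v)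
        then (1:ℝ) else 0) = (if G.Adj u v then 1 else 0) := if_congr Iff.rfl rfl rfl
    rw [hA]
    by_cases huv : u = v
    · subst huv
      rw [if_pos rfl, if_pos rfl, if_pos rfl, degT_inl G u]
      ring
    · rw [if_neg huv, if_neg huv, if_neg huv]
      ring
  · simp only [Matrix.sub_apply, Matrix.smul_apply, Matrix.one_apply, smul_eq_mul,
      Matrix.fromBlocks_apply₁₂, signlessLaplacian, Matrix.of_apply, Matrix.neg_apply]
    rw [if_neg (by simp : ¬ (Sum.inl u : V ⊕ G.edgeSet) = Sum.inr f),
      if_neg (by simp : ¬ (Sum.inl u : V ⊕ G.edgeSet) = Sum.inr f)]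
    have hA : (if (xyzTransform G XYZ.plus XYZ.plus XYZ.one).Adj (Sum.inl u) (Sum.inr f)
        then (1:ℝ) else 0) = 1 := if_pos True.intro
    rw [hA]
    ring
  · simp only [Matrix.sub_apply, Matrix.smul_apply, Matrix.one_apply, smul_eq_mul,
      Matrix.fromBlocks_apply₂₁, signlessLaplacian, Matrix.of_apply, Matrix.neg_apply]
    rw [if_neg (by simp : ¬ (Sum.inr e : V ⊕ G.edgeSet) = Sum.inl v),
      if_neg (by simp : ¬ (Sum.inr e : V ⊕ G.edgeSet) = Sum.inl v)]
    have hA : (if (xyzTransform G XYZ.plus XYZ.plus XYZ.one).Adj (Sum.inr e) (Sum.inl v)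
        then (1:ℝ) else 0) = 1 := if_pos True.intro
    rw [hA]
    ring
  · simp only [Matrix.sub_apply, Matrix.smul_apply, Matrix.one_apply, smul_eq_mul,
      Matrix.fromBlocks_apply₂₂, signlessLaplacian, Matrix.of_apply, Sum.inr.injEq]
    have hA : (if (xyzTransform G XYZ.plus XYZ.plus XYZ.one).Adj (Sum.inr e) (Sum.inr f)
        then (1:ℝ) else 0) = (if G.lineGraph.Adj e f then 1 else 0) := if_congr Iff.rfl rfl rfl
    rw [hA]
    by_cases hef : e = f
    · subst hef
      rw [degT_inr G hreg e, NMat_diag G e, if_neg (G.lineGraph.irrefl (v := e))]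
      norm_num
      ring
    · rw [NMat_ne G hef]
      simp [hef]

end XYZAux

namespace XYZAux

open Matrix Finset

variable {V : Type*} [Fintype V] (G : SimpleGraph V)

lemma Q_mulVec_one {r : ℕ} (hreg : G.IsRegularOfDegree r) :
    (signlessLaplacian G).mulVec (fun _ => (1:ℝ)) = fun _ => 2*(r:ℝ) := by
  classical
  funext u
  rw [Matrix.mulVec]
  show ∑ v, signlessLaplacian G u v * 1 = 2*(r:ℝ)
  simp only [signlessLaplacian, Matrix.of_apply, mul_one]
  rw [Finset.sum_add_distrib]
  have h1 : (∑ v, if u = v then (G.degree u : ℝ) else 0) = r := by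
    rw [Finset.sum_ite_eq (Finset.univ) u (fun _ => (G.degree u : ℝ))]
    simp [hreg u]
  have h2 : (∑ v, if G.Adj u v then (1:ℝ) else 0) = r := by
    rw [← degree_cast, hreg u]
  rw [h1, h2]; ring

lemma N_mulVec_one {r : ℕ} (hreg : G.IsRegularOfDegree r) :
    (NMat G).mulVec (fun _ => (1:ℝ)) = fun _ => 2*(r:ℝ) := by
  classical
  rw [NMat, ← Matrix.mulVec_mulVec]
  have h1 : (incMat G).mulVec (fun _ => (1:ℝ)) = fun _ => (r:ℝ) := by
    funext v
    rw [Matrix.mulVec]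
    show ∑ e, incMat G v e * 1 = (r:ℝ)
    simp only [incMat, Matrix.of_apply, mul_one]
    rw [sum_mem_edge G v, hreg v]
  rw [h1]
  funext e
  rw [Matrix.mulVec]
  show ∑ v, (incMat G)ᵀ e v * (r:ℝ) = 2*(r:ℝ)
  simp only [incMat, Matrix.transpose_apply, Matrix.of_apply]
  rw [← Finset.sum_mul]
  rw [sum_mem_vertex G e]

lemma inv_mulVec_one {k : Type*} [Fintype k] [DecidableEq k] (M : Matrix k k ℝ)
    (hM : IsUnit M.det) {d : ℝ} (hd : d ≠ 0)
    (hrow : M.mulVec (fun _ => 1) = fun _ => d) :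
    M⁻¹.mulVec (fun _ => 1) = fun _ => d⁻¹ := by
  have h1 : M⁻¹.mulVec (M.mulVec (fun _ => 1)) = fun _ => 1 := by
    rw [Matrix.mulVec_mulVec, Matrix.nonsing_inv_mul M hM, Matrix.one_mulVec]
  rw [hrow] at h1
  funext j
  have h2 : M⁻¹.mulVec (fun _ => d) j = d * M⁻¹.mulVec (fun _ => 1) j := by
    simp only [Matrix.mulVec, dotProduct, mul_one]
    rw [Finset.mul_sum]
    exact Finset.sum_congr rfl fun i _ => by ring
  have h3 := congrFun h1 j
  rw [h2] at h3
  field_simp at h3 ⊢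
  linarith [h3]

lemma sum_inv_entries {k : Type*} [Fintype k] [DecidableEq k] (M : Matrix k k ℝ)
    (hM : IsUnit M.det) {d : ℝ} (hd : d ≠ 0)
    (hrow : M.mulVec (fun _ => 1) = fun _ => d) :
    ∑ i, ∑ j, M⁻¹ i j = (Fintype.card k) * d⁻¹ := by
  have h := inv_mulVec_one M hM hd hrow
  have h2 : ∀ i, ∑ j, M⁻¹ i j = d⁻¹ := by
    intro i
    have := congrFun h i
    simpa [Matrix.mulVec, dotProduct] using this
  rw [Finset.sum_congr rfl fun i _ => h2 i]
  rw [Finset.sum_const, Finset.card_univ]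
  simp [mul_comm]

/-- `J * M * Jᵀ` in terms of the total entry sum of `M`. -/
lemma ones_mul_mul_ones {k W : Type*} [Fintype k] [Fintype W] (M : Matrix k k ℝ) :
    (Matrix.of fun (_ : W) (_ : k) => (1:ℝ)) * M * (Matrix.of fun (_ : k) (_ : W) => (1:ℝ))
      = Matrix.of fun _ _ => ∑ i, ∑ j, M i j := by
  ext u v
  rw [Matrix.mul_apply]
  simp only [Matrix.mul_apply, Matrix.of_apply, one_mul, mul_one]
  rw [Finset.sum_comm]

lemma detN_eq (hmn : Fintype.card V ≤ Fintype.card G.edgeSet) {y : ℝ} (hy : y ≠ 0) :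
    (y • (1 : Matrix G.edgeSet G.edgeSet ℝ) - NMat G).det
      = y ^ (Fintype.card G.edgeSet - Fintype.card V) *
        (y • (1 : Matrix V V ℝ) - signlessLaplacian G).det := by
  classical
  have key : y • (1 : Matrix G.edgeSet G.edgeSet ℝ) - NMat G
      = y • (1 - (incMat G)ᵀ * (y⁻¹ • incMat G)) := by
    rw [smul_sub, NMat]
    congr 1
    rw [Matrix.mul_smul, smul_smul, mul_inv_cancel₀ hy, one_smul]
  have key2 : y • (1 : Matrix V V ℝ) - signlessLaplacian G
      = y • (1 - (y⁻¹ • incMat G) * (incMat G)ᵀ) := by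
    rw [smul_sub, ← incMat_mul_transpose G]
    congr 1
    rw [Matrix.smul_mul, smul_smul, mul_inv_cancel₀ hy, one_smul]
  rw [key, key2, Matrix.det_smul, Matrix.det_smul,
    Matrix.det_one_sub_mul_comm]
  rw [← mul_assoc, ← pow_add]
  congr 2
  omega

lemma det_sub_smul_ones {k : Type*} [Fintype k] [DecidableEq k] (M : Matrix k k ℝ)
    (hM : IsUnit M.det) {d : ℝ} (hd : d ≠ 0)
    (hrow : M.mulVec (fun _ => 1) = fun _ => d) (t : ℝ) :
    (M - t • Matrix.of (fun _ _ : k => (1:ℝ))).det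
      = M.det * (1 - t * Fintype.card k / d) := by
  classical
  have hsplit : M - t • Matrix.of (fun _ _ : k => (1:ℝ))
      = M + Matrix.replicateCol Unit (fun _ : k => -t) * Matrix.replicateRow Unit (fun _ : k => (1:ℝ)) := by
    ext i j
    simp [Matrix.mul_apply, Matrix.replicateCol, Matrix.replicateRow, sub_eq_add_neg]
  rw [hsplit, Matrix.det_add_replicateCol_mul_replicateRow hM]
  congr 1
  rw [Matrix.det_unique, Matrix.add_apply, Matrix.one_apply_eq]
  have : (Matrix.replicateRow Unit (fun _ : k => (1:ℝ)) * M⁻¹ * Matrix.replicateCol Unit (fun _ : k => -t))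
      default default = ∑ j, (∑ i, M⁻¹ i j) * (-t) := by
    rw [Matrix.mul_apply]
    refine Finset.sum_congr rfl fun j _ => ?_
    rw [Matrix.mul_apply]
    simp [Matrix.replicateRow, Matrix.replicateCol]
  rw [this]
  have hswap : ∑ j, (∑ i, M⁻¹ i j) * (-t) = (∑ i, ∑ j, M⁻¹ i j) * (-t) := by
    rw [← Finset.sum_mul]
    congr 1
    rw [Finset.sum_comm]
  rw [hswap, sum_inv_entries M hM hd hrow]
  field_simp
  try ring

lemma prod_split {n : ℕ} (hn : 0 < n) (f : Fin n → ℝ) :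
    ∏ i, f i = f ⟨n-1, by omega⟩ * ∏ i : Fin (n-1), f (Fin.castLE (Nat.sub_le n 1) i) := by
  obtain ⟨k, rfl⟩ : ∃ k, n = k + 1 := ⟨n-1, by omega⟩
  rw [Fin.prod_univ_castSucc, mul_comm]
  congr 1
  all_goals first
    | exact congrArg f (Fin.ext rfl)
    | exact Finset.prod_congr rfl fun i _ => congrArg f (Fin.ext rfl)
    | rfl

end XYZAux

open XYZAux in
set_option maxHeartbeats 1600000 in
theorem signless_charpoly_xyz_pp1 {V : Type*} [Fintype V] (G : SimpleGraph V) (r n m : ℕ)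
    (hn : Fintype.card V = n) (hm : Fintype.card G.edgeSet = m)
    (hreg : G.IsRegularOfDegree r) (hr2 : 2 ≤ r) (hn0 : 0 < n)
    (q : Fin n → ℝ) (hmono : Monotone q)
    (hlast : q ⟨n - 1, by omega⟩ = 2 * r)
    (hq : ∀ x : ℝ, fQ G x = ∏ i : Fin n, (x - q i)) :
    ∀ lam : ℝ,
      fQ (xyzTransform G XYZ.plus XYZ.plus XYZ.one) lam =
        ((lam - 2 * r - m) * (lam - n - 4 * r + 4) - m * n) *
          (lam - n - 2 * r + 4) ^ (m - n) *
          ∏ i : Fin (n - 1), ((lam - n - 2 * r + 4 - (q (Fin.castLE (Nat.sub_le n 1) i))) * (lam - m - (q (Fin.castLE (Nat.sub_le n 1) i)))) := by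
  classical
  -- m ≥ n
  have hmn : n ≤ m := by
    have hsum := G.sum_degrees_eq_twice_card_edges
    have h1 : ∑ v : V, G.degree v = n * r := by
      rw [Finset.sum_congr rfl fun v _ => hreg v, Finset.sum_const, Finset.card_univ, hn]
      ring
    rw [h1, SimpleGraph.edgeFinset_card, hm] at hsum
    nlinarith
  have hQdet : ∀ t : ℝ, (t • (1 : Matrix V V ℝ) - signlessLaplacian G).det
      = ∏ i : Fin n, (t - q i) := fun t => hq t
  have hcardE : Fintype.card V ≤ Fintype.card G.edgeSet := by omega
  -- the bad set of parameters
  set s : Set ℝ := (Set.range fun i : Fin n => (m:ℝ) + q i) ∪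
      ((Set.range fun i : Fin n => (n:ℝ) + 2*r - 4 + q i) ∪ {(n:ℝ) + 2*r - 4}) with hs
  have hsfin : s.Finite :=
    (Set.finite_range _).union ((Set.finite_range _).union (Set.finite_singleton _))
  have hdense : Dense sᶜ := hsfin.countable.dense_compl ℝ
  have hfun : (fun lam : ℝ => fQ (xyzTransform G XYZ.plus XYZ.plus XYZ.one) lam)
      = fun lam : ℝ =>
        ((lam - 2 * r - m) * (lam - n - 4 * r + 4) - m * n) *
          (lam - n - 2 * r + 4) ^ (m - n) *
          ∏ i : Fin (n - 1), ((lam - n - 2 * r + 4 - (q (Fin.castLE (Nat.sub_le n 1) i))) *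
            (lam - m - (q (Fin.castLE (Nat.sub_le n 1) i)))) := by
    have hc1 : Continuous fun lam : ℝ => fQ (xyzTransform G XYZ.plus XYZ.plus XYZ.one) lam := by
      simp only [fQ_eq_det]
      exact Continuous.matrix_det ((continuous_id.smul continuous_const).sub continuous_const)
    have hc2 : Continuous fun lam : ℝ =>
        ((lam - 2 * r - m) * (lam - n - 4 * r + 4) - m * n) *
          (lam - n - 2 * r + 4) ^ (m - n) *
          ∏ i : Fin (n - 1), ((lam - n - 2 * r + 4 - (q (Fin.castLE (Nat.sub_le n 1) i))) *
            (lam - m - (q (Fin.castLE (Nat.sub_le n 1) i)))) := by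
      apply Continuous.mul
      · apply Continuous.mul <;> fun_prop
      · exact continuous_finset_prod _ fun i _ => by fun_prop
    refine Continuous.ext_on hdense hc1 hc2 ?_
    intro lam hlam
    simp only [hs, Set.mem_compl_iff, Set.mem_union, Set.mem_range, Set.mem_singleton_iff,
      not_or, not_exists] at hlam
    obtain ⟨h1, h2, h3⟩ := hlam
    have hxq : ∀ i : Fin n, lam - m - q i ≠ 0 := by
      intro i h; exact h1 i (by linarith)
    have hyq : ∀ i : Fin n, lam - n - 2*r + 4 - q i ≠ 0 := by
      intro i h; exact h2 i (by linarith)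
    have hy0 : lam - n - 2*r + 4 ≠ 0 := by
      intro h; exact h3 (by linarith)
    have hx2r : lam - m - 2*r ≠ 0 := by
      have := hxq ⟨n-1, by omega⟩
      rw [hlast] at this
      intro h; exact this (by linarith)
    have hy2r : lam - n - 2*r + 4 - 2*r ≠ 0 := by
      have := hyq ⟨n-1, by omega⟩
      rw [hlast] at this
      exact this
    -- unfold the determinant
    show fQ (xyzTransform G XYZ.plus XYZ.plus XYZ.one) lam =
      ((lam - 2 * (r:ℝ) - m) * (lam - n - 4 * r + 4) - m * n) *
        (lam - n - 2 * r + 4) ^ (m - n) *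
        ∏ i : Fin (n - 1), ((lam - n - 2 * r + 4 - (q (Fin.castLE (Nat.sub_le n 1) i))) *
          (lam - m - (q (Fin.castLE (Nat.sub_le n 1) i))))
    rw [fQ_eq_det, block_eq G hreg lam, hn, hm]
    -- the bottom-right block
    set D : Matrix G.edgeSet G.edgeSet ℝ :=
      (lam - (n:ℝ) - 2*r + 4) • 1 - NMat G with hD
    have hDdet : D.det = (lam - (n:ℝ) - 2*r + 4) ^ (m - n) * ∏ i : Fin n,
        (lam - (n:ℝ) - 2*r + 4 - q i) := by
      have h := detN_eq G (y := lam - (n:ℝ) - 2*r + 4) hcardE hy0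
      rw [hQdet, hn, hm] at h
      exact h
    have hDunit : IsUnit D.det := by
      rw [hDdet]
      apply IsUnit.mul
      · exact (pow_ne_zero _ hy0).isUnit
      · exact (Finset.prod_ne_zero_iff.mpr fun i _ => hyq i).isUnit
    haveI : Invertible D := D.invertibleOfIsUnitDet hDunit
    rw [Matrix.det_fromBlocks₂₂]
    rw [Matrix.invOf_eq_nonsing_inv]
    have hDrow : D.mulVec (fun _ => 1) = fun _ => (lam - (n:ℝ) - 2*r + 4) - 2*r := by
      rw [hD, Matrix.sub_mulVec, N_mulVec_one G hreg]
      funext e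
      rw [Matrix.smul_mulVec, Matrix.one_mulVec]
      simp
    have hBDC : (-(Matrix.of fun (_ : V) (_ : G.edgeSet) => (1:ℝ))) * D⁻¹ *
        (-(Matrix.of fun (_ : G.edgeSet) (_ : V) => (1:ℝ)))
        = ((m : ℝ) * ((lam - (n:ℝ) - 2*r + 4) - 2*r)⁻¹) •
            Matrix.of fun (_ _ : V) => (1:ℝ) := by
      simp only [Matrix.neg_mul, Matrix.mul_neg, neg_neg]
      rw [ones_mul_mul_ones, sum_inv_entries D hDunit hy2r hDrow, hm]
      ext u v
      simp
    rw [hBDC]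
    have hQrow : ((lam - (m:ℝ)) • (1 : Matrix V V ℝ) - signlessLaplacian G).mulVec
        (fun _ => 1) = fun _ => (lam - (m:ℝ)) - 2*r := by
      rw [Matrix.sub_mulVec, Q_mulVec_one G hreg]
      funext v
      rw [Matrix.smul_mulVec, Matrix.one_mulVec]
      simp
    have hQunit : IsUnit ((lam - (m:ℝ)) • (1 : Matrix V V ℝ) - signlessLaplacian G).det := by
      rw [hQdet]
      exact (Finset.prod_ne_zero_iff.mpr fun i _ => hxq i).isUnit
    have hx2r' : (lam - (m:ℝ)) - 2*r ≠ 0 := fun h => hx2r (by linarith)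
    rw [det_sub_smul_ones _ hQunit hx2r' hQrow _]
    rw [hQdet, hDdet, hn]
    -- now pure arithmetic
    have hsplitx : (∏ i : Fin n, (lam - (m:ℝ) - q i))
        = (lam - (m:ℝ) - 2*r) * ∏ i : Fin (n-1), (lam - (m:ℝ) - q (Fin.castLE (Nat.sub_le n 1) i)) := by
      rw [prod_split hn0 (fun i => lam - (m:ℝ) - q i), hlast]
    have hsplity : (∏ i : Fin n, (lam - (n:ℝ) - 2*r + 4 - q i))
        = (lam - (n:ℝ) - 2*r + 4 - 2*r) *
          ∏ i : Fin (n-1), (lam - (n:ℝ) - 2*r + 4 - q (Fin.castLE (Nat.sub_le n 1) i)) := by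
      rw [prod_split hn0 (fun i => lam - (n:ℝ) - 2*r + 4 - q i), hlast]
    have hprod : (∏ i : Fin (n-1), ((lam - (n:ℝ) - 2*r + 4 - q (Fin.castLE (Nat.sub_le n 1) i)) *
          (lam - (m:ℝ) - q (Fin.castLE (Nat.sub_le n 1) i))))
        = (∏ i : Fin (n-1), (lam - (n:ℝ) - 2*r + 4 - q (Fin.castLE (Nat.sub_le n 1) i))) *
          ∏ i : Fin (n-1), (lam - (m:ℝ) - q (Fin.castLE (Nat.sub_le n 1) i)) :=
      Finset.prod_mul_distrib
    rw [hsplitx, hsplity, hprod]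
    have e1 : (lam - (m:ℝ)) - q ⟨n-1, by omega⟩ = lam - m - 2*r := by rw [hlast]
    field_simp
    ring
  intro lam
  exact congrFun hfun lam
end
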